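/- Let p be a prime, r ∈ {1,…,p−1}, and let u be a binary word starting with 1. Then the pair (u 0^{|u|} 1^r 0, u 0^{|u|} 1 0) satisfies condition (⋆)_r: (u0^{|u|}1^r0 choose u0^{|u|}10) ≡ r (mod p), and appending either letter 0 or 1 to the second word makes the binomial coefficient zero. -/

import Mathlib

/-- The binomial coefficient of words: the number of occurrences of the second
word as a scattered subsequence of the first. -/
def wb {A : Type*} [DecidableEq A] : List A → List A → ℕ
  | _, [] => 1
  | [], _ :: _ => 0
  | a :: u, b :: v => wb u (b :: v) + (if a = b then wb u v else 0)

lemma wb_nil {A : Type*} [DecidableEq A] (u : List A) : wb u [] = 1 := by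
  cases u <;> rfl

lemma wb_cons {A : Type*} [DecidableEq A] (a b : A) (u v : List A) :
    wb (a :: u) (b :: v) = wb u (b :: v) + (if a = b then wb u v else 0) := rfl

lemma lemC {A : Type*} [DecidableEq A] (a : A) :
    ∀ s t : List A, s.count a < t.count a → wb s t = 0 := by
  intro s
  induction s with
  | nil =>
    intro t h
    cases t with
    | nil => simp at h
    | cons b t' => rfl
  | cons c s' ih =>
    intro t h
    cases t with
    | nil => simp at h
    | cons b t' =>
      rw [wb_cons]
      have h1 : s'.count a < (b :: t').count a := by
        have := List.count_cons (a := a) (b := c) (l := s')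
        omega
      rw [ih _ h1]
      split
      · next hcb =>
        subst hcb
        have h2 : s'.count a < t'.count a := by
          have e1 := List.count_cons (a := a) (b := c) (l := s')
          have e2 := List.count_cons (a := a) (b := c) (l := t')
          omega
        rw [ih _ h2]
      · rfl

def tp : List Bool → ℕ
  | true :: l => tp l + 1
  | _ => 0

@[simp] lemma tp_nil : tp [] = 0 := rfl
@[simp] lemma tp_false (l : List Bool) : tp (false :: l) = 0 := rfl
@[simp] lemma tp_true (l : List Bool) : tp (true :: l) = tp l + 1 := rfl

lemma tp_append_false (v w : List Bool) : tp (v ++ false :: w) = tp (v ++ [false]) := by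
  induction v with
  | nil => rfl
  | cons a v' ih => cases a <;> simp [ih]

lemma lemZ : ∀ s t : List Bool, s.count false = t.count false → tp s < tp t → wb s t = 0 := by
  intro s
  induction s with
  | nil =>
    intro t hc ht
    cases t with
    | nil => simp at ht
    | cons b t' => rfl
  | cons c s' ih =>
    intro t hc ht
    cases t with
    | nil => simp at ht
    | cons b t' =>
      cases b
      · cases c <;> simp at ht
      · cases c
        · -- c = false
          rw [wb_cons]
          have h1 : s'.count false < (true :: t').count false := by
            simp [List.count_cons] at hc ⊢
            omega
          rw [lemC false _ _ h1]
          simp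
        · -- c = true
          rw [wb_cons]
          simp only [List.count_cons] at hc
          simp at hc
          simp only [tp_true] at ht
          have hc1 : s'.count false = (true :: t').count false := by
            simp [List.count_cons, hc]
          have ht1 : tp s' < tp (true :: t') := by simp; omega
          have ht2 : tp s' < tp t' := by omega
          rw [ih _ hc1 ht1, ih _ hc ht2]
          simp

lemma peel (s t : List Bool) (h : s.count false = t.count false) :
    wb (false :: s) (false :: t) = wb s t := by
  rw [wb_cons]
  have h1 : s.count false < (false :: t).count false := by
    simp [List.count_cons]
    omega
  rw [lemC false _ _ h1]
  simp

lemma peel_rep : ∀ (n : ℕ) (s t : List Bool), s.count false = t.count false →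
    wb (List.replicate n false ++ s) (List.replicate n false ++ t) = wb s t := by
  intro n
  induction n with
  | zero => intro s t h; rfl
  | succ k ih =>
    intro s t h
    rw [List.replicate_succ, List.cons_append, List.cons_append]
    rw [peel _ _ (by simp [List.count_append, h])]
    exact ih _ _ h

lemma lemM : ∀ (u s t : List Bool), s.count false = t.count false →
    wb (u ++ false :: s) (u ++ false :: t) = wb (false :: s) (false :: t) := by
  intro u
  induction u with
  | nil => intro s t h; rfl
  | cons a u' ih =>
    intro s t h
    rw [List.cons_append, List.cons_append, wb_cons]
    cases a
    · -- a = false : cross term dies by count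
      have h1 : (u' ++ false :: s).count false < (false :: (u' ++ false :: t)).count false := by
        simp [List.count_append, List.count_cons, h]
      rw [lemC false _ _ h1, ih _ _ h]
      simp
    · -- a = true : cross term dies by tp
      have hc : (u' ++ false :: s).count false = (u' ++ false :: t).count false := by
        simp [List.count_append, List.count_cons, h]
      have htp : tp (u' ++ false :: s) < tp (true :: (u' ++ false :: t)) := by
        rw [tp_append_false u' s]
        simp
        rw [tp_append_false u' t]
      have hc' : (u' ++ false :: s).count false = (true :: (u' ++ false :: t)).count false := by
        simpa [List.count_cons] using hc
      rw [lemZ _ _ hc' htp, ih _ _ h]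
      simp

lemma wb_ones_zero : ∀ k, wb (List.replicate k true ++ [false]) [false] = 1 := by
  intro k
  induction k with
  | zero => rfl
  | succ n ih =>
    rw [List.replicate_succ, List.cons_append, wb_cons, ih]
    simp

lemma wb_core : ∀ r, wb (List.replicate r true ++ [false]) [true, false] = r := by
  intro r
  induction r with
  | zero => rfl
  | succ n ih =>
    rw [List.replicate_succ, List.cons_append]
    show wb _ (true :: [false]) = n + 1
    rw [wb_cons, ih]
    simp [wb_ones_zero]

lemma wb_nil_app {A : Type*} [DecidableEq A] (t : List A) (b : A) :
    wb [] (t ++ [b]) = 0 := by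
  cases t <;> rfl

lemma wb_snoc {A : Type*} [DecidableEq A] :
    ∀ (s t : List A) (a b : A),
      wb (s ++ [a]) (t ++ [b]) = wb s (t ++ [b]) + (if a = b then wb s t else 0) := by
  intro s
  induction s with
  | nil =>
    intro t a b
    cases t with
    | nil => simp [wb, wb_nil]
    | cons c t' =>
      simp only [List.nil_append, List.cons_append, wb_cons, wb_nil_app]
      simp [wb]
  | cons c s' ih =>
    intro t a b
    cases t with
    | nil =>
      have h1 := ih [] a b
      simp only [List.nil_append, List.cons_append, wb_cons, wb_nil] at h1 ⊢
      rw [h1]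
      split_ifs <;> omega
    | cons d t' =>
      have h1 := ih (d :: t') a b
      have h2 := ih t' a b
      simp only [List.cons_append] at h1 ⊢
      rw [wb_cons, wb_cons, h1, h2, wb_cons]
      split_ifs <;> omega

theorem stmt_18 (p : ℕ) (hp : p.Prime) (r : ℕ) (hr1 : 1 ≤ r) (hr2 : r ≤ p - 1)
    (u : List Bool) (hu : ∃ u' : List Bool, u = true :: u') :
    wb (u ++ List.replicate u.length false ++ List.replicate r true ++ [false])
       (u ++ List.replicate u.length false ++ [true, false]) % p = r ∧
    wb (u ++ List.replicate u.length false ++ List.replicate r true ++ [false])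
       ((u ++ List.replicate u.length false ++ [true, false]) ++ [false]) = 0 ∧
    wb (u ++ List.replicate u.length false ++ List.replicate r true ++ [false])
       ((u ++ List.replicate u.length false ++ [true, false]) ++ [true]) = 0 := by
  obtain ⟨v, rfl⟩ := hu
  refine ⟨?_, ?_, ?_⟩
  · -- main value
    have hc : (List.replicate v.length false ++ (List.replicate r true ++ [false])).count false
        = (List.replicate v.length false ++ [true, false]).count false := by
      simp [List.count_append, List.count_replicate, List.count_cons]
    have key := lemM (true :: v)
      (List.replicate v.length false ++ (List.replicate r true ++ [false]))
      (List.replicate v.length false ++ [true, false]) hc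
    rw [peel _ _ hc, peel_rep _ _ _ (by simp [List.count_cons, List.count_replicate]), wb_core r] at key
    have hgoal : wb ((true :: v) ++ List.replicate (true :: v).length false
          ++ List.replicate r true ++ [false])
        ((true :: v) ++ List.replicate (true :: v).length false ++ [true, false]) = r := by
      simpa [List.replicate_succ, List.cons_append, List.append_assoc] using key
    rw [hgoal]
    have hp2 := hp.two_le
    exact Nat.mod_eq_of_lt (by omega)
  · -- extra false
    apply lemC false
    simp [List.count_append, List.count_replicate, List.count_cons]
  · -- extra true
    have hs : (true :: v) ++ List.replicate (true :: v).length false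
          ++ List.replicate r true ++ [false]
        = ((true :: v) ++ List.replicate (true :: v).length false
          ++ List.replicate r true) ++ [false] := by
      simp [List.append_assoc]
    rw [hs, wb_snoc]
    simp only [if_neg (by decide : ¬ (false = true)), add_zero]
    apply lemC false
    simp [List.count_append, List.count_replicate, List.count_cons]
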